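/- Inserting dividers every 2M characters (as in the construction of S' ! S'') guarantees that no two distinct suffixes of the combined string S' ! S'' share a common prefix of length more than 4M, and hence the position heap of S' ! S'' has height O(M). -/

import Mathlib

/-- Insert fresh divider symbols (right injections, numbered from `k`) after
every `2 * M` characters of `l`. -/
def withDividers {α : Type} (M : ℕ) (k : ℕ) (l : List α) : List (α ⊕ ℕ) :=
  if h : M = 0 ∨ l.length ≤ 2 * M then l.map Sum.inl
  else (l.take (2 * M)).map Sum.inl ++ Sum.inr k :: withDividers M (k + 1) (l.drop (2 * M))
  termination_by l.length
  decreasing_by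
    push_neg at h
    simp only [List.length_drop]
    omega

/-- The combined string `S' ! S''`, where `S'` is `S` with dividers after every
`2M` characters (tags `0, 1, ...`), `!` is a fresh symbol (tag
`2 * |S| + 2`), and `S''` is `S` with dividers after every `2M` characters
starting from position `M + 1` (tags from `|S| + 1`); all inserted symbols are
pairwise distinct and occur exactly once. -/
def combinedString {α : Type} (M : ℕ) (S : List α) : List (α ⊕ ℕ) :=
  withDividers M 0 S ++ Sum.inr (2 * S.length + 2) ::
    (if S.length ≤ M then S.map Sum.inl
     else (S.take M).map Sum.inl ++ Sum.inr (S.length + 1) ::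
       withDividers M (S.length + 2) (S.drop M))

namespace CombinedAux

attribute [-instance] Sum.instBEq

open List

variable {α : Type}

theorem mapInl_isLeft (l : List α) : ∀ x ∈ l.map (Sum.inl : α → α ⊕ ℕ), x.isLeft := by
  intro x hx
  obtain ⟨a, -, rfl⟩ := List.mem_map.mp hx
  rfl

/-- A string made of divider-free blocks of length at most `2M` separated by
divider symbols. -/
inductive Good (M : ℕ) : List (α ⊕ ℕ) → Prop
  | base (a : List (α ⊕ ℕ)) (ha : ∀ x ∈ a, x.isLeft) (hlen : a.length ≤ 2 * M) : Good M a
  | step (a : List (α ⊕ ℕ)) (k : ℕ) (b : List (α ⊕ ℕ)) (ha : ∀ x ∈ a, x.isLeft)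
      (hlen : a.length ≤ 2 * M) (hb : Good M b) : Good M (a ++ Sum.inr k :: b)

theorem Good.append {M : ℕ} {u v : List (α ⊕ ℕ)} (k : ℕ) (hu : Good M u) (hv : Good M v) :
    Good M (u ++ Sum.inr k :: v) := by
  induction hu with
  | base a ha hlen => exact Good.step a k v ha hlen hv
  | step a k' b ha hlen hb ih =>
      rw [List.append_assoc, List.cons_append]
      exact Good.step a k' (b ++ Sum.inr k :: v) ha hlen ih

theorem good_withDividers (M : ℕ) (hM : 1 ≤ M) (k : ℕ) (l : List α) :
    Good M (withDividers M k l) := by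
  rw [withDividers]
  split
  next h =>
    refine Good.base _ (mapInl_isLeft l) ?_
    simp only [List.length_map]
    omega
  next h =>
    push_neg at h
    refine Good.step _ _ _ (mapInl_isLeft _) ?_ (good_withDividers M hM (k + 1) (l.drop (2 * M)))
    simp only [List.length_map, List.length_take]
    omega
  termination_by l.length
  decreasing_by
    simp only [List.length_drop]; omega

theorem good_combinedString (M : ℕ) (hM : 1 ≤ M) (S : List α) :
    Good M (combinedString M S) := by
  unfold combinedString
  refine Good.append _ (good_withDividers M hM 0 S) ?_
  split
  next h =>
    refine Good.base _ (mapInl_isLeft _) ?_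
    simp only [List.length_map]; omega
  next h =>
    refine Good.step _ _ _ (mapInl_isLeft _) ?_ (good_withDividers M hM _ _)
    simp only [List.length_map, List.length_take]; omega

/-- Any divider-free prefix of a suffix of a `Good` string has length at most `2M`. -/
theorem good_infix {M : ℕ} {l : List (α ⊕ ℕ)} (hl : Good M l) :
    ∀ (i : ℕ) (t : List (α ⊕ ℕ)), t <+: l.drop i → (∀ x ∈ t, x.isLeft) → t.length ≤ 2 * M := by
  induction hl with
  | base a ha hlen =>
      intro i t ht _
      have := ht.length_le
      simp only [List.length_drop] at this
      omega
  | step a k b ha hlen hb ih =>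
      intro i t ht htl
      by_cases hi : i ≤ a.length
      · rw [List.drop_append_of_le_length hi] at ht
        by_contra hcon
        push_neg at hcon
        -- hcon : 2 * M < t.length ; then t reaches past `a.drop i` into the divider
        have hm : (a.drop i).length < t.length := by
          simp only [List.length_drop]; omega
        have hmlen : (a.drop i).length < (a.drop i ++ Sum.inr k :: b).length := by
          simp
        have hget : t[(a.drop i).length]'hm =
            (a.drop i ++ Sum.inr k :: b)[(a.drop i).length]'hmlen := ht.getElem hm
        rw [List.getElem_append_right (le_refl _)] at hget
        simp only [Nat.sub_self, List.getElem_cons_zero] at hget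
        have := htl _ (List.getElem_mem hm)
        rw [hget] at this
        simp at this
      · push_neg at hi
        have : (a ++ Sum.inr k :: b).drop i = b.drop (i - a.length - 1) := by
          have h1 : i = a.length + (i - a.length - 1 + 1) := by omega
          rw [h1, List.drop_append]
          simp
        rw [this] at ht
        exact ih _ _ ht htl

/-- Tags of dividers inserted by `withDividers M k l` lie in `[k, k + l.length)`. -/
theorem wd_mem_inr (M k : ℕ) (l : List α) (j : ℕ)
    (h : Sum.inr j ∈ withDividers M k l) : k ≤ j ∧ j < k + l.length := by
  rw [withDividers] at h
  split at h
  next hc => simp at h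
  next hc =>
    push_neg at hc
    simp only [List.mem_append, List.mem_cons, List.mem_map] at h
    rcases h with h | h | h
    · obtain ⟨x, -, hx⟩ := h; cases hx
    · have : j = k := by injection h
      omega
    · have := wd_mem_inr M (k + 1) (l.drop (2 * M)) j h
      simp only [List.length_drop] at this
      omega
  termination_by l.length
  decreasing_by
    simp only [List.length_drop]; omega

/-- `List.count` with the `BEq` instance coming from `DecidableEq`. -/
def cnt [DecidableEq α] (x : α ⊕ ℕ) (l : List (α ⊕ ℕ)) : ℕ :=
  @List.count (α ⊕ ℕ) instBEqOfDecidableEq x l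

theorem cnt_map_inl [DecidableEq α] (j : ℕ) (l : List α) :
    cnt (Sum.inr j) (l.map Sum.inl) = 0 := by
  unfold cnt
  rw [List.count_eq_zero]
  simp

theorem cnt_append [DecidableEq α] (x : α ⊕ ℕ) (u v : List (α ⊕ ℕ)) :
    cnt x (u ++ v) = cnt x u + cnt x v :=
  List.count_append ..

theorem cnt_pos_mem [DecidableEq α] {x : α ⊕ ℕ} {l : List (α ⊕ ℕ)} (h : 0 < cnt x l) :
    x ∈ l := by
  unfold cnt at h
  exact List.count_pos_iff.mp h

theorem cnt_eq_zero_of_not_mem [DecidableEq α] {x : α ⊕ ℕ} {l : List (α ⊕ ℕ)}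
    (h : x ∉ l) : cnt x l = 0 := by
  unfold cnt
  exact List.count_eq_zero.mpr h

theorem cnt_cons_inr [DecidableEq α] (j k : ℕ) (l : List (α ⊕ ℕ)) :
    cnt (Sum.inr j) (Sum.inr k :: l) = cnt (Sum.inr j) l + if j = k then 1 else 0 := by
  unfold cnt
  rw [List.count_cons]
  simp only [beq_iff_eq, Sum.inr.injEq]
  split_ifs <;> omega

theorem wd_cnt [DecidableEq α] (M k : ℕ) (l : List α) (j : ℕ) :
    cnt (Sum.inr j) (withDividers M k l) ≤ 1 := by
  rw [withDividers]
  split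
  next hc => rw [cnt_map_inl]; omega
  next hc =>
    push_neg at hc
    rw [cnt_append, cnt_map_inl, cnt_cons_inr]
    have hrec : cnt (Sum.inr j : α ⊕ ℕ) (withDividers M (k + 1) (l.drop (2 * M))) ≤ 1 :=
      wd_cnt M (k + 1) (l.drop (2 * M)) j
    have hrecr : 0 < cnt (Sum.inr j : α ⊕ ℕ) (withDividers M (k + 1) (l.drop (2 * M))) →
        k + 1 ≤ j := by
      intro h
      exact (wd_mem_inr M (k + 1) (l.drop (2 * M)) j (cnt_pos_mem h)).1
    split_ifs with hjk <;> omega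
  termination_by l.length
  decreasing_by
    simp only [List.length_drop]; omega

/-- Every divider symbol occurs at most once in the combined string. -/
theorem combined_cnt [DecidableEq α] (M : ℕ) (hM : 1 ≤ M) (S : List α) (j : ℕ) :
    cnt (Sum.inr j) (combinedString M S) ≤ 1 := by
  unfold combinedString
  have hc1 : cnt (Sum.inr j : α ⊕ ℕ) (withDividers M 0 S) ≤ 1 := wd_cnt M 0 S j
  have hc1r : 0 < cnt (Sum.inr j : α ⊕ ℕ) (withDividers M 0 S) → j < S.length := by
    intro h
    have := wd_mem_inr M 0 S j (cnt_pos_mem h)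
    omega
  rw [cnt_append, cnt_cons_inr]
  split
  next h =>
    rw [cnt_map_inl]
    split_ifs <;> omega
  next h =>
    push_neg at h
    rw [cnt_append, cnt_map_inl, cnt_cons_inr]
    have hc2 : cnt (Sum.inr j : α ⊕ ℕ) (withDividers M (S.length + 2) (S.drop M)) ≤ 1 :=
      wd_cnt M (S.length + 2) (S.drop M) j
    have hc2r : 0 < cnt (Sum.inr j : α ⊕ ℕ) (withDividers M (S.length + 2) (S.drop M)) →
        S.length + 2 ≤ j ∧ j < S.length + 2 + (S.length - M) := by
      intro hc
      have h' := wd_mem_inr M (S.length + 2) (S.drop M) j (cnt_pos_mem hc)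
      simp only [List.length_drop] at h'
      omega
    split_ifs <;> omega

theorem two_le_cnt [DecidableEq α] (l : List (α ⊕ ℕ)) (a b : ℕ) (x : α ⊕ ℕ)
    (hab : a < b) (hb : b < l.length) (hxa : l[a]'(hab.trans hb) = x) (hxb : l[b]'hb = x) :
    2 ≤ cnt x l := by
  have h1 : x ∈ l.take b := by
    have ha' : a < (l.take b).length := by simp; omega
    have e : (l.take b)[a]'ha' = l[a]'(hab.trans hb) := by simp
    have hmem := List.getElem_mem ha'
    rw [e, hxa] at hmem
    exact hmem
  have h2 : x ∈ l.drop b := by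
    have h0 : 0 < (l.drop b).length := by simp; omega
    have e : (l.drop b)[0]'h0 = l[b]'hb := by simp
    have hmem := List.getElem_mem h0
    rw [e, hxb] at hmem
    exact hmem
  have hc1 : 0 < cnt x (l.take b) := List.count_pos_iff.mpr h1
  have hc2 : 0 < cnt x (l.drop b) := List.count_pos_iff.mpr h2
  have := cnt_append x (l.take b) (l.drop b)
  rw [List.take_append_drop] at this
  omega

end CombinedAux

/-- Inserting dividers every `2M` characters guarantees that no
two distinct suffixes of `S' ! S''` share a common prefix of length more than
`4M`; hence (by the height bound for position heaps) every node of any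
position heap for `S' ! S''` has depth at most `4M + 1`, i.e. the height is
`O(M)`. -/
theorem combinedString_lcp_le_and_heap_height
    {α : Type} [DecidableEq α] (M : ℕ) (hM : 1 ≤ M) (S : List α) :
    (∀ i j : ℕ, i < (combinedString M S).length → j < (combinedString M S).length →
      i ≠ j → ∀ t : List (α ⊕ ℕ),
        t <+: (combinedString M S).drop i → t <+: (combinedString M S).drop j →
        t.length ≤ 4 * M) ∧
    (∀ (nodes : Finset (List (α ⊕ ℕ))) (lab : List (α ⊕ ℕ) → ℕ),
      (∀ p ∈ nodes, ∀ q : List (α ⊕ ℕ), q <+: p → q ∈ nodes) →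
      Set.BijOn lab ↑nodes (Set.Iic (combinedString M S).length) →
      (([] : List (α ⊕ ℕ)) ∈ nodes ∧ lab [] = 0) →
      (∀ p ∈ nodes, ∀ q ∈ nodes, p <+: q → lab p ≤ lab q) →
      (∀ p ∈ nodes, 1 ≤ lab p → p <+: (combinedString M S).drop (lab p - 1)) →
      ∀ p ∈ nodes, p.length ≤ 4 * M + 1) := by
  set L := combinedString M S with hL
  have hGood : CombinedAux.Good M L := CombinedAux.good_combinedString M hM S
  have hcount : ∀ j : ℕ, CombinedAux.cnt (Sum.inr j) L ≤ 1 :=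
    CombinedAux.combined_cnt M hM S
  have part1 : ∀ i j : ℕ, i < L.length → j < L.length → i ≠ j →
      ∀ t : List (α ⊕ ℕ), t <+: L.drop i → t <+: L.drop j → t.length ≤ 4 * M := by
    intro i j hi hj hij t hti htj
    by_contra hlen
    push_neg at hlen
    have hnotleft : ¬ ∀ x ∈ t, x.isLeft := by
      intro h
      have := CombinedAux.good_infix hGood i t hti h
      omega
    push_neg at hnotleft
    obtain ⟨x, hx, hxl⟩ := hnotleft
    obtain ⟨k, rfl⟩ : ∃ k, x = Sum.inr k := by
      cases x with
      | inl a => simp at hxl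
      | inr k => exact ⟨k, rfl⟩
    obtain ⟨d, hd, hdx⟩ := List.getElem_of_mem hx
    have hdi : i + d < L.length := by
      have := hti.length_le
      simp only [List.length_drop] at this
      omega
    have hdj : j + d < L.length := by
      have := htj.length_le
      simp only [List.length_drop] at this
      omega
    have hgi : L[i + d]'hdi = Sum.inr k := by
      have h1 : t[d]'hd = (L.drop i)[d]'(by simp; omega) := hti.getElem hd
      have h2 : (L.drop i)[d]'(by simp; omega) = L[i + d]'hdi := List.getElem_drop
      rw [h1, h2] at hdx
      exact hdx
    have hgj : L[j + d]'hdj = Sum.inr k := by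
      have h1 : t[d]'hd = (L.drop j)[d]'(by simp; omega) := htj.getElem hd
      have h2 : (L.drop j)[d]'(by simp; omega) = L[j + d]'hdj := List.getElem_drop
      rw [h1, h2] at hdx
      exact hdx
    have h2c : 2 ≤ CombinedAux.cnt (Sum.inr k) L := by
      rcases lt_or_gt_of_ne (show i + d ≠ j + d by omega) with h | h
      · exact CombinedAux.two_le_cnt L (i + d) (j + d) _ h hdj hgi hgj
      · exact CombinedAux.two_le_cnt L (j + d) (i + d) _ h hdi hgj hgi
    have := hcount k
    omega
  refine ⟨part1, ?_⟩
  intro nodes lab hclosed hbij hroot hmono hpos p hp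
  by_contra hcon
  push_neg at hcon
  -- p has length ≥ 4M + 2; look at its prefixes of lengths 4M+1 and 4M+2
  set q1 : List (α ⊕ ℕ) := p.take (4 * M + 1) with hq1
  set q2 : List (α ⊕ ℕ) := p.take (4 * M + 2) with hq2
  have hq1len : q1.length = 4 * M + 1 := by simp [hq1]; omega
  have hq2len : q2.length = 4 * M + 2 := by simp [hq2]; omega
  have hq1p : q1 <+: p := List.take_prefix _ _
  have hq2p : q2 <+: p := List.take_prefix _ _
  have hq12 : q1 <+: q2 := by
    have : q1 = q2.take (4 * M + 1) := by
      rw [hq1, hq2, List.take_take]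
      congr 1
      omega
    rw [this]
    exact List.take_prefix _ _
  have hq1n : q1 ∈ nodes := hclosed p hp q1 hq1p
  have hq2n : q2 ∈ nodes := hclosed p hp q2 hq2p
  have hq1ne : q1 ≠ ([] : List (α ⊕ ℕ)) := by
    intro h; rw [h] at hq1len; simp at hq1len
  have hq2ne : q2 ≠ ([] : List (α ⊕ ℕ)) := by
    intro h; rw [h] at hq2len; simp at hq2len
  have hlab1 : 1 ≤ lab q1 := by
    rcases Nat.eq_zero_or_pos (lab q1) with h | h
    · exfalso
      exact hq1ne (hbij.injOn hq1n hroot.1 (by rw [h, hroot.2]))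
    · exact h
  have hlab2 : 1 ≤ lab q2 := by
    rcases Nat.eq_zero_or_pos (lab q2) with h | h
    · exfalso
      exact hq2ne (hbij.injOn hq2n hroot.1 (by rw [h, hroot.2]))
    · exact h
  have hlabne : lab q1 ≠ lab q2 := by
    intro h
    have : q1 = q2 := hbij.injOn hq1n hq2n h
    rw [this] at hq1len
    omega
  have hb1 : lab q1 ≤ L.length := hbij.mapsTo hq1n
  have hb2 : lab q2 ≤ L.length := hbij.mapsTo hq2n
  have hpre1 : q1 <+: L.drop (lab q1 - 1) := hpos q1 hq1n hlab1
  have hpre2 : q2 <+: L.drop (lab q2 - 1) := hpos q2 hq2n hlab2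
  have hpre1' : q1 <+: L.drop (lab q2 - 1) := hq12.trans hpre2
  have := part1 (lab q1 - 1) (lab q2 - 1) (by omega) (by omega)
    (by omega) q1 hpre1 hpre1'
  omega
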